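/- Any set of square roots of distinct prime numbers is linearly independent over the rationals. That is, if p_1, ..., p_n are distinct primes and c_1, ..., c_n are rational numbers with c_1·√p_1 + ... + c_n·√p_n = 0, then c_1 = ... = c_n = 0. -/

import Mathlib

noncomputable def sqrtField (S : Finset ℕ) : IntermediateField ℚ ℝ :=
  IntermediateField.adjoin ℚ ((fun n : ℕ => Real.sqrt n) '' (S : Set ℕ))

theorem sqrt_not_mem_sqrtField (S : Finset ℕ) :
    (∀ p ∈ S, Nat.Prime p) → ∀ m : ℕ, Squarefree m → 1 < m →
      (∀ p ∈ S, ¬ p ∣ m) → Real.sqrt m ∉ sqrtField S := by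
  induction S using Finset.induction_on with
  | empty =>
    intro _ m hsf hm _ hmem
    have hns : ¬ IsSquare m := by
      rintro ⟨k, rfl⟩
      have hk : k = 1 := Nat.isUnit_iff.mp (hsf k (dvd_refl _))
      subst hk; omega
    have hirr : Irrational (Real.sqrt m) := irrational_sqrt_natCast_iff.mpr hns
    rw [sqrtField] at hmem
    simp only [Finset.coe_empty, Set.image_empty, IntermediateField.adjoin_empty,
      IntermediateField.mem_bot] at hmem
    exact hirr (by simpa using hmem)
  | @insert q S' hqS' ih =>
    intro hprime m hsf hm hcop hmem
    have hqprime : Nat.Prime q := hprime q (Finset.mem_insert_self _ _)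
    have hS'prime : ∀ p ∈ S', Nat.Prime p := fun p hp =>
      hprime p (Finset.mem_insert_of_mem hp)
    set K := sqrtField S' with hK
    have hq : Real.sqrt q ∉ K := by
      refine ih hS'prime q hqprime.squarefree hqprime.one_lt ?_
      intro p hp hdvd
      have := (Nat.prime_dvd_prime_iff_eq (hS'prime p hp) hqprime).mp hdvd
      exact hqS' (this ▸ hp)
    have hq0 : (0:ℝ) ≤ (q:ℝ) := Nat.cast_nonneg q
    have hsq : Real.sqrt q * Real.sqrt q = (q:ℝ) := Real.mul_self_sqrt hq0
    have hqK : ((q:ℕ):ℝ) ∈ K := by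
      have : ((q:ℚ):ℝ) ∈ K := SubfieldClass.ratCast_mem K (q:ℚ)
      simpa using this
    set T : IntermediateField ℚ ℝ :=
      { carrier := {x : ℝ | ∃ a ∈ K, ∃ b ∈ K, x = a + b * Real.sqrt q}
        add_mem' := by
          rintro x y ⟨a, ha, b, hb, rfl⟩ ⟨a', ha', b', hb', rfl⟩
          exact ⟨a + a', add_mem ha ha', b + b', add_mem hb hb', by ring⟩
        mul_mem' := by
          rintro x y ⟨a, ha, b, hb, rfl⟩ ⟨a', ha', b', hb', rfl⟩
          refine ⟨a * a' + b * b' * (q:ℝ),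
            add_mem (mul_mem ha ha') (mul_mem (mul_mem hb hb') hqK),
            a * b' + a' * b, add_mem (mul_mem ha hb') (mul_mem ha' hb), ?_⟩
          linear_combination b * b' * hsq
        one_mem' := ⟨1, one_mem K, 0, zero_mem K, by ring⟩
        zero_mem' := ⟨0, zero_mem K, 0, zero_mem K, by ring⟩
        algebraMap_mem' := fun r =>
          ⟨algebraMap ℚ ℝ r, K.algebraMap_mem r, 0, zero_mem K, by ring⟩
        inv_mem' := by
          rintro x ⟨a, ha, b, hb, rfl⟩
          by_cases hx : a + b * Real.sqrt q = 0
          · rw [hx]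
            exact ⟨0, zero_mem K, 0, zero_mem K, by norm_num⟩
          have hd : a * a - b * b * (q:ℝ) ≠ 0 := by
            intro hd0
            by_cases hb0 : b = 0
            · apply hx
              have : a = 0 := mul_self_eq_zero.mp (by rw [hb0] at hd0; linarith)
              simp [this, hb0]
            · apply hq
              have hsqq : Real.sqrt q = a / b ∨ Real.sqrt q = -(a / b) := by
                have h1 : (Real.sqrt q - a / b) * (Real.sqrt q + a / b) = 0 := by
                  field_simp
                  nlinarith [hsq]
                rcases mul_eq_zero.mp h1 with h2 | h2
                · left; linarith
                · right; linarith
              rcases hsqq with h2 | h2 <;> rw [h2]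
              · exact div_mem ha hb
              · exact neg_mem (div_mem ha hb)
          have hmul : (a / (a * a - b * b * (q:ℝ)) +
              (-b / (a * a - b * b * (q:ℝ))) * Real.sqrt q) *
              (a + b * Real.sqrt q) = 1 := by
            rw [show (a / (a * a - b * b * (q:ℝ)) + (-b / (a * a - b * b * (q:ℝ))) * Real.sqrt q) *
                (a + b * Real.sqrt q) = (a * a - b * b * (Real.sqrt q * Real.sqrt q)) /
                (a * a - b * b * (q:ℝ)) by ring, hsq, div_self hd]
          refine ⟨a / (a * a - b * b * (q:ℝ)),
            div_mem ha (sub_mem (mul_mem ha ha) (mul_mem (mul_mem hb hb) hqK)),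
            -b / (a * a - b * b * (q:ℝ)),
            div_mem (neg_mem hb) (sub_mem (mul_mem ha ha) (mul_mem (mul_mem hb hb) hqK)),
            (eq_inv_of_mul_eq_one_left hmul).symm⟩ } with hT
    have hle : sqrtField (insert q S') ≤ T := by
      rw [sqrtField]
      apply IntermediateField.adjoin_le_iff.mpr
      rintro x ⟨nn, hnn, rfl⟩
      simp only [Finset.coe_insert, Set.mem_insert_iff] at hnn
      show ∃ a ∈ K, ∃ b ∈ K, Real.sqrt nn = a + b * Real.sqrt q
      rcases hnn with rfl | hnn
      · exact ⟨0, zero_mem K, 1, one_mem K, by ring⟩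
      · exact ⟨Real.sqrt nn, IntermediateField.subset_adjoin ℚ _ ⟨nn, hnn, rfl⟩,
          0, zero_mem K, by ring⟩
    have hmem' : ∃ a ∈ K, ∃ b ∈ K, Real.sqrt m = a + b * Real.sqrt q := hle hmem
    obtain ⟨a, ha, b, hb, hab⟩ := hmem'
    have hm0 : (0:ℝ) ≤ (m:ℝ) := Nat.cast_nonneg m
    have hsm : Real.sqrt m * Real.sqrt m = (m:ℝ) := Real.mul_self_sqrt hm0
    have hmK : ((m:ℕ):ℝ) ∈ K := by
      have : ((m:ℚ):ℝ) ∈ K := SubfieldClass.ratCast_mem K (m:ℚ)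
      simpa using this
    by_cases hb0 : b = 0
    · refine ih hS'prime m hsf hm (fun p hp => hcop p (Finset.mem_insert_of_mem hp)) ?_
      rw [hab, hb0]
      simpa using ha
    by_cases ha0 : a = 0
    · have hqm : ¬ q ∣ m := hcop q (Finset.mem_insert_self _ _)
      have hcopmq : Nat.Coprime m q := ((hqprime.coprime_iff_not_dvd).mpr hqm).symm
      refine ih hS'prime (m * q) ((Nat.squarefree_mul hcopmq).mpr ⟨hsf, hqprime.squarefree⟩)
        (lt_of_lt_of_le hm (Nat.le_mul_of_pos_right m hqprime.pos)) ?_ ?_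
      · intro p hp hdvd
        rcases (hS'prime p hp).dvd_mul.mp hdvd with h1 | h1
        · exact hcop p (Finset.mem_insert_of_mem hp) h1
        · have := (Nat.prime_dvd_prime_iff_eq (hS'prime p hp) hqprime).mp h1
          exact hqS' (this ▸ hp)
      · have heq : Real.sqrt ((m : ℝ) * (q : ℝ)) = b * (q:ℝ) := by
          rw [Real.sqrt_mul hm0, hab, ha0]
          linear_combination b * hsq
        rw [Nat.cast_mul, heq]
        exact mul_mem hb hqK
    · apply hq
      have h2K : (2:ℝ) ∈ K := by
        have : ((2:ℚ):ℝ) ∈ K := SubfieldClass.ratCast_mem K (2:ℚ)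
        simpa using this
      have h2ab : (2:ℝ) * a * b ≠ 0 := by
        simp [ha0, hb0]
      have hsquare : (m:ℝ) = a * a + b * b * (q:ℝ) + 2 * a * b * Real.sqrt q := by
        have h1 : (m:ℝ) = (a + b * Real.sqrt q) * (a + b * Real.sqrt q) := by
          rw [← hsm, hab]
        linear_combination h1 + b * b * hsq
      have key : Real.sqrt q = ((m:ℝ) - a * a - b * b * (q:ℝ)) / (2 * a * b) := by
        rw [eq_div_iff h2ab]
        linarith [hsquare]
      rw [key]
      exact div_mem (sub_mem (sub_mem hmK (mul_mem ha ha)) (mul_mem (mul_mem hb hb) hqK))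
        (mul_mem (mul_mem h2K ha) hb)

theorem sqrt_primes_rationally_independent
    (n : ℕ) (p : Fin n → ℕ) (hp : ∀ i, (p i).Prime)
    (hinj : Function.Injective p) (c : Fin n → ℚ)
    (h : ∑ i, (c i : ℝ) * Real.sqrt (p i) = 0) :
    ∀ i, c i = 0 := by
  intro i
  by_contra hci
  set S : Finset ℕ := (Finset.univ.erase i).image p with hS
  have hSprime : ∀ q ∈ S, Nat.Prime q := by
    rintro q hq
    simp only [hS, Finset.mem_image] at hq
    obtain ⟨j, _, rfl⟩ := hq
    exact hp j
  have hsum : (c i : ℝ) * Real.sqrt (p i) +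
      ∑ j ∈ Finset.univ.erase i, (c j : ℝ) * Real.sqrt (p j) = 0 := by
    rw [← Finset.add_sum_erase Finset.univ _ (Finset.mem_univ i)] at h
    exact h
  have hciR : (c i : ℝ) ≠ 0 := by exact_mod_cast hci
  have hmemsum : ∑ j ∈ Finset.univ.erase i, (c j : ℝ) * Real.sqrt (p j) ∈ sqrtField S := by
    apply sum_mem
    intro j hj
    have hsqrtmem : Real.sqrt (p j) ∈ sqrtField S := by
      apply IntermediateField.subset_adjoin ℚ
      exact ⟨p j, by simpa [hS] using Finset.mem_image_of_mem p hj, rfl⟩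
    have hcmem : ((c j : ℚ) : ℝ) ∈ sqrtField S := SubfieldClass.ratCast_mem _ _
    exact mul_mem hcmem hsqrtmem
  have hmem : Real.sqrt (p i) ∈ sqrtField S := by
    have : Real.sqrt (p i) = (-(c i : ℝ)⁻¹) *
        ∑ j ∈ Finset.univ.erase i, (c j : ℝ) * Real.sqrt (p j) := by
      field_simp
      linarith [hsum]
    rw [this]
    have : (-(c i : ℝ)⁻¹) = ((-(c i)⁻¹ : ℚ) : ℝ) := by push_cast; ring
    rw [this]
    exact mul_mem (SubfieldClass.ratCast_mem _ _) hmemsum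
  refine sqrt_not_mem_sqrtField S hSprime (p i) (hp i).squarefree (hp i).one_lt ?_ hmem
  intro q hq hdvd
  simp only [hS, Finset.mem_image, Finset.mem_erase] at hq
  obtain ⟨j, ⟨hji, _⟩, rfl⟩ := hq
  exact hji (hinj ((Nat.prime_dvd_prime_iff_eq (hp j) (hp i)).mp hdvd))
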